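/- For every c ≥ 1, the group G = ⟨t, a | a^{3^c} = 1, [a,t] = a³⟩ ≅ C_∞ ⋉ C_{3^c} (where t acts on a by a^t = a⁴) is nilpotent of class exactly c and has the Magnus property. -/

import Mathlib

def MagnusProperty (G : Type*) [Group G] : Prop :=
  ∀ g h : G, Subgroup.normalClosure {g} = Subgroup.normalClosure {h} →
    IsConj g h ∨ IsConj g h⁻¹

/-- `4` as a unit of `ZMod (3^c)`. -/
def fourUnit (c : ℕ) : (ZMod (3 ^ c))ˣ :=
  ZMod.unitOfCoprime 4 (Nat.Coprime.pow_right c (by norm_num))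

/-- The action of `C_∞ = Multiplicative ℤ` on `C_{3^c}` with the generator `t`
acting by `a ↦ a⁴`. -/
def phiFour (c : ℕ) : Multiplicative ℤ →* MulAut (Multiplicative (ZMod (3 ^ c))) :=
  zpowersHom _ (AddEquiv.toMultiplicative (AddAut.mulLeft (fourUnit c)))

/-- The group `G = C_∞ ⋉ C_{3^c} = ⟨t, a ∣ a^{3^c} = 1, aᵗ = a⁴⟩`. -/
abbrev GpExample (c : ℕ) : Type :=
  SemidirectProduct (Multiplicative (ZMod (3 ^ c))) (Multiplicative ℤ) (phiFour c)

namespace MagnusAux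

variable {c : ℕ}

/-- `4^n` as an element of `ZMod (3^c)`, for `n : ℤ`. -/
def q (c : ℕ) (n : ℤ) : ZMod (3^c) := ((fourUnit c ^ n : (ZMod (3^c))ˣ) : ZMod (3^c))

def mmk (a : ZMod (3^c)) (n : ℤ) : GpExample c :=
  ⟨Multiplicative.ofAdd a, Multiplicative.ofAdd n⟩

lemma aux_mul (u v : (ZMod (3^c))ˣ) :
    AddEquiv.toMultiplicative (AddAut.mulLeft u) * AddEquiv.toMultiplicative (AddAut.mulLeft v)
      = AddEquiv.toMultiplicative (AddAut.mulLeft (u*v)) := by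
  ext x; simp [mul_assoc]; rfl

lemma aux_inv (u : (ZMod (3^c))ˣ) :
    (AddEquiv.toMultiplicative (AddAut.mulLeft u))⁻¹
      = AddEquiv.toMultiplicative (AddAut.mulLeft u⁻¹) := by
  rw [map_inv (AddAut.mulLeft : (ZMod (3^c))ˣ →* Multiplicative (AddAut (ZMod (3^c)))) u]
  ext x
  show Multiplicative.ofAdd ((AddAut.mulLeft u).symm (Multiplicative.toAdd x)) = _
  rfl

lemma aux_pow (n : ℤ) : (AddEquiv.toMultiplicative (AddAut.mulLeft (fourUnit c)))^n
    = AddEquiv.toMultiplicative (AddAut.mulLeft ((fourUnit c)^n)) := by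
  induction n using Int.induction_on with
  | zero => ext x; simp; rfl
  | succ k ih => rw [zpow_add_one, ih, zpow_add_one, ← aux_mul]
  | pred k ih => rw [zpow_sub_one, ih, aux_inv, aux_mul, ← zpow_sub_one]

lemma phi_apply (n : ℤ) (b : ZMod (3^c)) :
    phiFour c (Multiplicative.ofAdd n) (Multiplicative.ofAdd b)
      = Multiplicative.ofAdd (q c n * b) := by
  have : phiFour c (Multiplicative.ofAdd n)
      = ((AddEquiv.toMultiplicative (AddAut.mulLeft (fourUnit c)))^n) := by
    simp [phiFour]
  rw [this, aux_pow]
  rfl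

lemma mmk_mul (a b : ZMod (3^c)) (n m : ℤ) :
    mmk a n * mmk b m = mmk (a + q c n * b) (n + m) := by
  have hl : (mmk a n * mmk b m).left = (mmk (a + q c n * b) (n + m) : GpExample c).left := by
    show Multiplicative.ofAdd a * phiFour c (Multiplicative.ofAdd n) (Multiplicative.ofAdd b) = _
    rw [phi_apply]; rfl
  exact SemidirectProduct.ext hl rfl

lemma mmk_one : (mmk 0 0 : GpExample c) = 1 := rfl

lemma mmk_surj (g : GpExample c) :
    g = mmk (Multiplicative.toAdd g.left) (Multiplicative.toAdd g.right) := rfl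

lemma q_add (n m : ℤ) : q c (n+m) = q c n * q c m := by
  simp [q, zpow_add]

lemma q_zero : q c 0 = 1 := by simp [q]

lemma q_mul_q_neg (n : ℤ) : q c n * q c (-n) = 1 := by
  rw [← q_add]; simp [q_zero]

lemma mmk_inv (a : ZMod (3^c)) (n : ℤ) :
    (mmk a n)⁻¹ = mmk (-(q c (-n) * a)) (-n) := by
  rw [eq_comm, eq_inv_iff_mul_eq_one, mmk_mul]
  have h : -(q c (-n) * a) + q c (-n) * a = 0 := by ring
  rw [h, neg_add_cancel, mmk_one]

lemma mmk_inj {a b : ZMod (3^c)} {n m : ℤ} (h : mmk a n = mmk b m) : a = b ∧ n = m := by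
  have h1 := congrArg (fun g : GpExample c => Multiplicative.toAdd g.left) h
  have h2 := congrArg (fun g : GpExample c => Multiplicative.toAdd g.right) h
  exact ⟨h1, h2⟩

lemma mmk_conj (w a : ZMod (3^c)) (s n : ℤ) :
    mmk w s * mmk a n * (mmk w s)⁻¹ = mmk (q c s * a + (1 - q c n) * w) n := by
  rw [mmk_inv, mmk_mul, mmk_mul]
  have h : q c (s+n) * q c (-s) = q c n := by
    rw [← q_add]; congr 1; ring
  congr 1
  · linear_combination (-w) * h
  · ring

/-! ### Number theory over ℤ -/

lemma pow4_pow3 (j : ℕ) : ∃ w : ℤ, (4:ℤ)^(3^j) = 1 + 3^(j+1) + 3^(j+2) * w := by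
  induction j with
  | zero => exact ⟨0, by norm_num⟩
  | succ j ih =>
      obtain ⟨w, hw⟩ := ih
      refine ⟨w + 3^j*(1+3*w)^2 + 3^(2*j)*(1+3*w)^3, ?_⟩
      have h3 : (3:ℕ)^(j+1) = 3^j * 3 := by ring
      rw [h3, pow_mul, hw]
      ring

lemma pow4_pow3_mul (j t : ℕ) : ∃ w : ℤ, (4:ℤ)^(3^j * t) = 1 + 3^(j+1)*t + 3^(j+2) * w := by
  induction t with
  | zero => exact ⟨0, by norm_num⟩
  | succ t ih =>
      obtain ⟨w₁, hw₁⟩ := ih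
      obtain ⟨w₂, hw₂⟩ := pow4_pow3 j
      refine ⟨w₁ + w₂ + 3^j*t + 3^(j+1)*t*w₂ + 3^(j+1)*w₁ + 3^(j+2)*w₁*w₂, ?_⟩
      have h3 : 3^j * (t+1) = 3^j*t + 3^j := by ring
      rw [h3, pow_add, hw₁, hw₂]
      push_cast
      ring

lemma unitFact_int (j : ℕ) (y : ℤ) : ∃ s : ℕ, ∃ w : ℤ, (4:ℤ)^s = 1 + 3*y + 3^(j+1) * w := by
  induction j with
  | zero => exact ⟨0, -y, by ring⟩
  | succ j ih =>
      obtain ⟨s, w, hw⟩ := ih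
      obtain ⟨t, u, htu⟩ : ∃ (t : ℕ) (u : ℤ), w + (t:ℤ) = 3*u := by
        refine ⟨((-w) % 3).toNat, (w + ((-w) % 3).toNat)/3, ?_⟩
        have h0 : (0:ℤ) ≤ (-w) % 3 := Int.emod_nonneg _ (by norm_num)
        have h1 : (((-w) % 3).toNat : ℤ) = (-w) % 3 := Int.toNat_of_nonneg h0
        have h2 : (3:ℤ) ∣ (w + ((-w) % 3).toNat) := by
          rw [h1]
          have h3 : (-w) % 3 ≡ -w [ZMOD 3] := Int.emod_emod_of_dvd _ (dvd_refl 3)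
          omega
        exact (Int.ediv_mul_cancel h2).symm ▸ (by rw [h1]; omega)
      obtain ⟨w₂, hw₂⟩ := pow4_pow3_mul j t
      refine ⟨s + 3^j * t, u + y*t + w₂ + 3*y*w₂ + 3^j*t*w + 3^(j+1)*w*w₂, ?_⟩
      rw [pow_add, hw, hw₂]
      have hw' : w = 3*u - t := by omega
      rw [hw']
      ring

/-! ### facts about `q` in `ZMod (3^c)` -/

lemma q_natCast (s : ℕ) : q c (s:ℤ) = (4 : ZMod (3^c))^s := by
  rw [q, zpow_natCast, Units.val_pow_eq_pow_val]
  norm_num [fourUnit, ZMod.coe_unitOfCoprime]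

/-- Every element of `1 + 3·ZMod (3^c)` is a power of `4`. -/
lemma unit_form (b : ZMod (3^c)) : ∃ s : ℤ, q c s = 1 + 3*b := by
  obtain ⟨s, w, hw⟩ := unitFact_int c (b.val : ℤ)
  refine ⟨(s:ℤ), ?_⟩
  rw [q_natCast]
  have := congrArg (fun z : ℤ => (z : ZMod (3^c))) hw
  push_cast at this
  rw [this]
  have h3c : ((3:ZMod (3^c)))^(c+1) = 0 := by
    have h0 : ((3^c : ℕ) : ZMod (3^c)) = 0 := ZMod.natCast_self _
    push_cast at h0
    rw [pow_succ, h0, zero_mul]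
  rw [h3c]
  rw [ZMod.natCast_val, ZMod.cast_id]
  ring

lemma units_sub_one_dvd (v : (ZMod (3^c))ˣ) (k : ℤ) :
    ((v:ZMod (3^c)) - 1) ∣ (((v^k : (ZMod (3^c))ˣ) : ZMod (3^c)) - 1) := by
  induction k using Int.induction_on with
  | zero => simp
  | succ m ih =>
      have : ((v^((m:ℤ)+1) : (ZMod (3^c))ˣ) : ZMod (3^c)) - 1
          = ((v^(m:ℤ) : (ZMod (3^c))ˣ) : ZMod (3^c)) * ((v:ZMod (3^c)) - 1)
            + (((v^(m:ℤ) : (ZMod (3^c))ˣ) : ZMod (3^c)) - 1) := by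
        rw [zpow_add_one, Units.val_mul]; ring
      rw [this]
      exact dvd_add (Dvd.intro_left _ rfl) ih
  | pred m ih =>
      have : ((v^(-(m:ℤ)-1) : (ZMod (3^c))ˣ) : ZMod (3^c)) - 1
          = ((v^(-(m:ℤ)-1) : (ZMod (3^c))ˣ) : ZMod (3^c)) * (1 - (v:ZMod (3^c)))
            + (((v^(-(m:ℤ)) : (ZMod (3^c))ˣ) : ZMod (3^c)) - 1) := by
        have h1 : ((v^(-(m:ℤ)-1) : (ZMod (3^c))ˣ) : ZMod (3^c)) * (v:ZMod (3^c))
            = ((v^(-(m:ℤ)) : (ZMod (3^c))ˣ) : ZMod (3^c)) := by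
          rw [← Units.val_mul, ← zpow_add_one]
          norm_num
        rw [mul_sub, mul_one, h1]; ring
      rw [this]
      have hneg : ((v:ZMod (3^c)) - 1) ∣ (1 - (v:ZMod (3^c))) := ⟨-1, by ring⟩
      exact dvd_add (Dvd.dvd.mul_left hneg _) ih

lemma q_sub_one_dvd (n k : ℤ) : (1 - q c n) ∣ (1 - q c (k*n)) := by
  have h := units_sub_one_dvd (c := c) (fourUnit c ^ n) k
  have h2 : (fourUnit c ^ n)^k = fourUnit c ^ (k*n) := by rw [← zpow_mul, mul_comm]
  rw [h2] at h
  obtain ⟨d, hd⟩ := h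
  exact ⟨d, by rw [q, q] at *; linear_combination -hd⟩

lemma three_dvd_q (n : ℤ) : (3:ZMod (3^c)) ∣ (1 - q c n) := by
  have h := q_sub_one_dvd (c := c) 1 n
  rw [mul_one] at h
  have h4 : q c 1 = 4 := by
    have := q_natCast (c := c) 1
    norm_num at this
    exact this
  rw [h4] at h
  exact dvd_trans ⟨-1, by ring⟩ h

/-! ### The explicit normal closure -/

def Jd (c : ℕ) (a : ZMod (3^c)) (n : ℤ) : Ideal (ZMod (3^c)) := Ideal.span {3*a, 1 - q c n}

lemma mem_Jd_3a (a : ZMod (3^c)) (n : ℤ) (y : ZMod (3^c)) : 3*a*y ∈ Jd c a n :=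
  Ideal.mul_mem_right _ _ (Ideal.subset_span (by simp))

lemma mem_Jd_q (a : ZMod (3^c)) (n k : ℤ) (y : ZMod (3^c)) : (1 - q c (k*n))*y ∈ Jd c a n := by
  obtain ⟨d, hd⟩ := q_sub_one_dvd (c := c) n k
  rw [hd, mul_assoc]
  exact Ideal.mul_mem_right _ _ (Ideal.subset_span (by simp))

lemma mem_Jd_3 (a : ZMod (3^c)) (n s : ℤ) (y : ZMod (3^c)) : (1 - q c s)*(a*y) ∈ Jd c a n := by
  obtain ⟨d, hd⟩ := three_dvd_q (c := c) s
  rw [hd]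
  have : 3 * d * (a * y) = 3*a*(d*y) := by ring
  rw [this]
  exact mem_Jd_3a a n _

def Ng (c : ℕ) (a : ZMod (3^c)) (n : ℤ) : Subgroup (GpExample c) where
  carrier := {g | ∃ k : ℤ, Multiplicative.toAdd g.right = k * n ∧
      Multiplicative.toAdd g.left - (k : ZMod (3^c)) * a ∈ Jd c a n}
  one_mem' := ⟨0, by simp, by simpa using (Jd c a n).zero_mem⟩
  mul_mem' := by
    rintro g h ⟨k, hk, hk2⟩ ⟨l, hl, hl2⟩
    refine ⟨k + l, ?_, ?_⟩
    · have : Multiplicative.toAdd (g*h).right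
          = Multiplicative.toAdd g.right + Multiplicative.toAdd h.right := rfl
      rw [this, hk, hl]; ring
    · have hL : Multiplicative.toAdd (g*h).left = Multiplicative.toAdd g.left
          + q c (Multiplicative.toAdd g.right) * Multiplicative.toAdd h.left := by
        have := mmk_mul (Multiplicative.toAdd g.left) (Multiplicative.toAdd h.left)
          (Multiplicative.toAdd g.right) (Multiplicative.toAdd h.right)
        rw [← mmk_surj, ← mmk_surj] at this
        rw [this]
        rfl
      rw [hL, hk]
      push_cast
      have heq : Multiplicative.toAdd g.left + q c (k*n) * Multiplicative.toAdd h.left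
          - ((k:ZMod (3^c)) + l) * a
          = (Multiplicative.toAdd g.left - k * a) + q c (k*n) * (Multiplicative.toAdd h.left - l*a)
            + (-(1 - q c (k*n))) * ((l:ZMod (3^c)) * a) := by push_cast; ring
      rw [heq]
      refine Ideal.add_mem _ (Ideal.add_mem _ hk2 (Ideal.mul_mem_left _ _ hl2)) ?_
      rw [neg_mul]
      exact neg_mem (mem_Jd_q a n k ((l:ZMod (3^c)) * a))
  inv_mem' := by
    rintro g ⟨k, hk, hk2⟩
    have hI : g⁻¹ = mmk (-(q c (-(Multiplicative.toAdd g.right)) * Multiplicative.toAdd g.left))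
        (-(Multiplicative.toAdd g.right)) := by
      rw [mmk_surj g, mmk_inv]
      rw [← mmk_surj g]
    refine ⟨-k, ?_, ?_⟩
    · rw [hI]
      show -(Multiplicative.toAdd g.right) = -k*n
      rw [hk]; ring
    · rw [hI]
      show -(q c (-(Multiplicative.toAdd g.right)) * Multiplicative.toAdd g.left)
          - ((-k : ℤ):ZMod (3^c)) * a ∈ Jd c a n
      rw [hk]
      have heq : -(q c (-(k*n)) * Multiplicative.toAdd g.left) - ((-k : ℤ):ZMod (3^c)) * a
          = -(q c (-(k*n))) * (Multiplicative.toAdd g.left - (k:ZMod (3^c))*a)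
            + (1 - q c (-k*n)) * ((k:ZMod (3^c))*a) := by
        push_cast
        have : (-(k*n) : ℤ) = -k*n := by ring
        rw [this]
        ring
      rw [heq]
      exact Ideal.add_mem _ (Ideal.mul_mem_left _ _ hk2) (mem_Jd_q a n (-k) _)

lemma mem_Ng (a : ZMod (3^c)) (n : ℤ) (x : ZMod (3^c)) (p : ℤ) :
    mmk x p ∈ Ng c a n ↔ ∃ k : ℤ, p = k * n ∧ x - (k : ZMod (3^c)) * a ∈ Jd c a n := by
  unfold Ng
  rw [Subgroup.mem_mk]
  rfl

lemma self_mem_Ng (a : ZMod (3^c)) (n : ℤ) : mmk a n ∈ Ng c a n :=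
  (mem_Ng a n a n).mpr ⟨1, by ring, by simpa using (Jd c a n).zero_mem⟩

instance Ng_normal (a : ZMod (3^c)) (n : ℤ) : (Ng c a n).Normal := by
  constructor
  intro g hg w
  rw [mmk_surj g] at hg
  obtain ⟨k, hk, hk2⟩ := (mem_Ng _ _ _ _).mp hg
  rw [mmk_surj g, mmk_surj w, mmk_conj, mem_Ng]
  refine ⟨k, hk ▸ rfl, ?_⟩
  rw [hk]
  have heq : q c (Multiplicative.toAdd w.right) * Multiplicative.toAdd g.left
      + (1 - q c (k*n)) * Multiplicative.toAdd w.left - (k:ZMod (3^c)) * a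
      = q c (Multiplicative.toAdd w.right) * (Multiplicative.toAdd g.left - (k:ZMod (3^c))*a)
        + (1 - q c (k*n)) * Multiplicative.toAdd w.left
        + (1 - q c (Multiplicative.toAdd w.right)) * (((k:ZMod (3^c))*a) * (-1)) := by ring
  rw [heq]
  refine Ideal.add_mem _ (Ideal.add_mem _ (Ideal.mul_mem_left _ _ hk2) (mem_Jd_q a n k _)) ?_
  have h2 : (1 - q c (Multiplicative.toAdd w.right)) * (((k:ZMod (3^c))*a) * (-1))
      = (1 - q c (Multiplicative.toAdd w.right)) * (a * (-(k:ZMod (3^c)))) := by ring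
  rw [h2]
  exact mem_Jd_3 a n (Multiplicative.toAdd w.right) _

lemma conj_mul_inv_mem (a : ZMod (3^c)) (n : ℤ) (w : ZMod (3^c)) (s : ℤ) :
    mmk w s * mmk a n * (mmk w s)⁻¹ * (mmk a n)⁻¹
      = mmk ((q c s - 1)*a + (1 - q c n)*w) 0 := by
  rw [mmk_conj, mmk_inv, mmk_mul]
  have h1 : q c s * a + (1 - q c n) * w + q c n * -(q c (-n) * a)
      = (q c s - 1)*a + (1 - q c n)*w := by
    have h2 : q c n * q c (-n) = 1 := q_mul_q_neg n
    linear_combination (-a) * h2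
  rw [h1, add_neg_cancel]

lemma Jd_part_mem (a : ZMod (3^c)) (n : ℤ) (z : ZMod (3^c)) (hz : z ∈ Jd c a n) :
    mmk z 0 ∈ Subgroup.normalClosure {mmk a n} := by
  set N := Subgroup.normalClosure {mmk a n} with hN
  have hg : mmk a n ∈ N := Subgroup.subset_normalClosure rfl
  have hnormal : N.Normal := Subgroup.normalClosure_normal
  -- (1 - q c n) * w ∈ "N"
  have hA1 : ∀ w : ZMod (3^c), mmk ((1 - q c n)*w) 0 ∈ N := by
    intro w
    have h1 : mmk w 0 * mmk a n * (mmk w 0)⁻¹ * (mmk a n)⁻¹ ∈ N :=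
      N.mul_mem (hnormal.conj_mem _ hg _) (N.inv_mem hg)
    rw [conj_mul_inv_mem] at h1
    rw [q_zero] at h1
    have h2 : ((1:ZMod (3^c)) - 1)*a + (1 - q c n)*w = (1 - q c n)*w := by ring
    rwa [h2] at h1
  have hA2 : ∀ y : ZMod (3^c), mmk (3*a*y) 0 ∈ N := by
    intro y
    obtain ⟨s, hs⟩ := unit_form (c := c) y
    have h1 : mmk 0 s * mmk a n * (mmk 0 s)⁻¹ * (mmk a n)⁻¹ ∈ N :=
      N.mul_mem (hnormal.conj_mem _ hg _) (N.inv_mem hg)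
    rw [conj_mul_inv_mem] at h1
    have h2 : (q c s - 1)*a + (1 - q c n)*0 = 3*a*y := by rw [hs]; ring
    rwa [h2] at h1
  obtain ⟨y₁, y₂, hy⟩ := Ideal.mem_span_pair.mp hz
  have h3 : mmk (y₁*(3*a)) 0 * mmk (y₂*(1 - q c n)) 0 = mmk z 0 := by
    rw [mmk_mul, q_zero, one_mul, hy]
    norm_num
  rw [← h3]
  refine N.mul_mem ?_ ?_
  · have : y₁*(3*a) = 3*a*y₁ := by ring
    rw [this]; exact hA2 y₁
  · have : y₂*(1 - q c n) = (1 - q c n)*y₂ := by ring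
    rw [this]; exact hA1 y₂

lemma pow_form (a : ZMod (3^c)) (n : ℤ) (k : ℤ) :
    ∃ ak : ZMod (3^c), (mmk a n)^k = mmk ak (k*n) ∧ ak - (k : ZMod (3^c))*a ∈ Jd c a n := by
  induction k using Int.induction_on with
  | zero => exact ⟨0, by rw [zpow_zero, zero_mul, mmk_one], by simpa using (Jd c a n).zero_mem⟩
  | succ k ih =>
      obtain ⟨ak, hak, hak2⟩ := ih
      refine ⟨ak + q c (k*n)*a, ?_, ?_⟩
      · rw [zpow_add_one, hak, mmk_mul]
        congr 1
        ring
      · have heq : ak + q c (k*n)*a - ((k:ℤ)+1 : ℤ)*a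
            = (ak - ((k:ℤ):ZMod (3^c))*a) + (-(1 - q c (k*n)))*a := by push_cast; ring
        rw [heq]
        refine Ideal.add_mem _ hak2 ?_
        rw [neg_mul]
        exact neg_mem (mem_Jd_q a n k a)
  | pred k ih =>
      obtain ⟨ak, hak, hak2⟩ := ih
      refine ⟨ak - q c ((-(k:ℤ)-1)*n)*a, ?_, ?_⟩
      · rw [zpow_sub_one, hak, mmk_inv, mmk_mul]
        congr 1
        · have h2 : q c (-(k:ℤ)*n) * q c (-n) = q c ((-(k:ℤ)-1)*n) := by
            rw [← q_add]; congr 1; ring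
          rw [mul_neg, ← mul_assoc, h2]; ring
        · ring
      · have heq : ak - q c ((-(k:ℤ)-1)*n)*a - ((-(k:ℤ)-1 : ℤ) : ZMod (3^c))*a
            = (ak - ((-(k:ℤ):ℤ) : ZMod (3^c))*a) + (1 - q c ((-(k:ℤ)-1)*n))*a := by
          push_cast; ring
        rw [heq]
        exact Ideal.add_mem _ hak2 (mem_Jd_q a n _ a)

theorem nc_eq (a : ZMod (3^c)) (n : ℤ) :
    Subgroup.normalClosure {mmk a n} = Ng c a n := by
  apply le_antisymm
  · exact Subgroup.normalClosure_le_normal (by simpa using self_mem_Ng a n)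
  · intro g hg
    rw [mmk_surj g] at hg
    obtain ⟨k, hk, hk2⟩ := (mem_Ng _ _ _ _).mp hg
    obtain ⟨ak, hak, hak2⟩ := pow_form (c := c) a n k
    set x := Multiplicative.toAdd g.left
    have hx : x - ak ∈ Jd c a n := by
      have heq : x - ak = (x - (k:ZMod (3^c))*a) - (ak - (k:ZMod (3^c))*a) := by ring
      rw [heq]
      exact Ideal.sub_mem _ hk2 hak2
    have hz : q c (-(k*n)) * (x - ak) ∈ Jd c a n := Ideal.mul_mem_left _ _ hx
    have hsplit : g = (mmk a n)^k * mmk (q c (-(k*n)) * (x - ak)) 0 := by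
      rw [hak, mmk_mul]
      have h1 : ak + q c (k*n) * (q c (-(k*n)) * (x - ak)) = x := by
        have h2 : q c (k*n) * q c (-(k*n)) = 1 := q_mul_q_neg _
        linear_combination (x - ak) * h2
      rw [h1, add_zero, ← hk, ← mmk_surj]
    rw [hsplit]
    have h5 : (mmk a n)^k ∈ Subgroup.normalClosure {mmk a n} :=
      Subgroup.zpow_mem _ (Subgroup.subset_normalClosure (Set.mem_singleton _)) k
    exact Subgroup.mul_mem _ h5 (Jd_part_mem a n _ hz)

/-! ### Magnus property -/

lemma q_one : q c 1 = 4 := by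
  have := q_natCast (c := c) 1
  norm_num at this
  exact this

lemma isConj_inv_helper {G : Type*} [Group G] {g h w : G} (hw : w * g⁻¹ * w⁻¹ = h) :
    w * g * w⁻¹ = h⁻¹ := by rw [← hw]; group

lemma a_eq_zero_of_unit (a u : ZMod (3^c)) (s : ℤ) (hs : q c s = u) (h : a * u = 0) :
    a = 0 := by
  have h2 : a * (u * q c (-s)) = 0 := by rw [← mul_assoc, h, zero_mul]
  rwa [← hs, q_mul_q_neg, mul_one] at h2

theorem magnus_of (hc : 1 ≤ c) : MagnusProperty (GpExample c) := by
  intro g h hcl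
  obtain ⟨a, n, rfl⟩ : ∃ a n, g = mmk a n := ⟨_, _, mmk_surj g⟩
  obtain ⟨b, m, rfl⟩ : ∃ b m, h = mmk b m := ⟨_, _, mmk_surj h⟩
  rw [nc_eq, nc_eq] at hcl
  have hb : mmk b m ∈ Ng c a n := hcl ▸ self_mem_Ng b m
  have ha : mmk a n ∈ Ng c b m := hcl ▸ self_mem_Ng a n
  obtain ⟨k, hk, hkJ⟩ := (mem_Ng _ _ _ _).mp hb
  obtain ⟨l, hl, hlJ⟩ := (mem_Ng _ _ _ _).mp ha
  by_cases hn : n = 0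
  · -- n = 0, m = 0
    subst hn
    rw [mul_zero] at hk
    subst hk
    rw [mul_zero] at hl
    obtain ⟨y₁, y₂, hy⟩ := Ideal.mem_span_pair.mp hkJ
    obtain ⟨z₁, z₂, hz⟩ := Ideal.mem_span_pair.mp hlJ
    rw [q_zero, sub_self, mul_zero, add_zero] at hy hz
    -- hy : y₁ * (3*a) = b - k*a,  hz : z₁ * (3*b) = a - l*b
    have hb2 : b = a * ((k : ZMod (3^c)) + 3*y₁) := by linear_combination -hy
    have ha2 : a = b * ((l : ZMod (3^c)) + 3*z₁) := by linear_combination -hz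
    by_cases hA : a = 0
    · left
      have hB : b = 0 := by rw [hb2, hA, zero_mul]
      rw [hA, hB]
    · have haPQ : a * (((k : ZMod (3^c)) + 3*y₁) * ((l : ZMod (3^c)) + 3*z₁)) = a := by
        rw [← mul_assoc, ← hb2, ← ha2]
      have hdm : k = 3*(k/3) + k % 3 := (Int.mul_ediv_add_emod k 3).symm
      have hr : k % 3 = 0 ∨ k % 3 = 1 ∨ k % 3 = 2 := by omega
      set d : ℤ := k/3 with hd
      rcases hr with hr | hr | hr
      · -- contradiction : a = 0
        exfalso
        apply hA
        obtain ⟨s, hs⟩ := unit_form (c := c)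
          (-(((d : ZMod (3^c)) + y₁) * ((l : ZMod (3^c)) + 3*z₁)))
        have hk3 : (k : ZMod (3^c)) = 3 * (d : ZMod (3^c)) := by
          have hkk : (k : ℤ) = 3*d := by omega
          rw [hkk]; push_cast; ring
        refine a_eq_zero_of_unit (c := c) a _ s hs ?_
        linear_combination -haPQ + (a*((l:ZMod (3^c))+3*z₁))*hk3
      · -- conjugate
        left
        have hk3 : (k : ZMod (3^c)) = 3 * (d : ZMod (3^c)) + 1 := by
          have : (k : ℤ) = 3*d + 1 := by omega
          rw [this]; push_cast; ring
        obtain ⟨s, hs⟩ := unit_form (c := c) ((d : ZMod (3^c)) + y₁)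
        rw [isConj_iff]
        refine ⟨mmk 0 s, ?_⟩
        rw [mmk_conj]
        have : q c s * a + (1 - q c 0) * 0 = b := by
          rw [q_zero, hs, hb2, hk3]; ring
        rw [this]
      · -- inverse-conjugate
        right
        have hk3 : (k : ZMod (3^c)) = 3 * (d : ZMod (3^c)) + 2 := by
          have : (k : ℤ) = 3*d + 2 := by omega
          rw [this]; push_cast; ring
        obtain ⟨s, hs⟩ := unit_form (c := c) (-(d : ZMod (3^c)) - 1 - y₁)
        rw [isConj_iff]
        refine ⟨mmk 0 s, ?_⟩
        apply isConj_inv_helper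
        have hinv : (mmk a (0:ℤ))⁻¹ = mmk (-a) 0 := by
          rw [mmk_inv]
          norm_num [q_zero]
        rw [hinv, mmk_conj]
        have : q c s * (-a) + (1 - q c 0) * 0 = b := by
          rw [q_zero, hs, hb2, hk3]; ring
        rw [this]
  · -- n ≠ 0
    have hlk : l * k = 1 := by
      rw [hk] at hl
      have : n * (1 - l*k) = 0 := by linear_combination hl
      rcases mul_eq_zero.mp this with h0 | h0
      · exact absurd h0 hn
      · omega
    have hk1 : k = 1 ∨ k = -1 := by
      rcases Int.mul_eq_one_iff_eq_one_or_neg_one.mp hlk with ⟨_, h⟩ | ⟨_, h⟩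
      · exact Or.inl h
      · exact Or.inr h
    obtain ⟨y, z, hy⟩ := Ideal.mem_span_pair.mp hkJ
    rcases hk1 with rfl | rfl
    · -- m = n : conjugate
      left
      have hmn : m = n := by omega
      subst hmn
      push_cast at hy
      -- hy : y*(3*a) + z*(1 - q c n) = b - a
      obtain ⟨s, hs⟩ := unit_form (c := c) y
      rw [isConj_iff]
      refine ⟨mmk z s, ?_⟩
      rw [mmk_conj]
      have : q c s * a + (1 - q c m) * z = b := by
        linear_combination a * hs + hy
      rw [this]
    · -- m = -n : inverse-conjugate
      right
      have hmn : m = -n := by omega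
      subst hmn
      push_cast at hy
      -- hy : y*(3*a) + z*(1 - q c n) = b + a
      obtain ⟨s', hs'⟩ := unit_form (c := c) (-y)
      rw [isConj_iff]
      refine ⟨mmk (-(q c n * z)) (s' + n), ?_⟩
      apply isConj_inv_helper
      rw [mmk_inv, mmk_conj]
      have e1 : q c (s'+n) * q c (-n) = q c s' := by
        rw [← q_add]; congr 1; ring
      have e2 : q c n * q c (-n) = 1 := q_mul_q_neg n
      have : q c (s'+n) * (-(q c (-n) * a)) + (1 - q c (-n)) * (-(q c n * z)) = b := by
        linear_combination (-a) * e1 + z * e2 + (-a) * hs' + hy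
      rw [this]

/-! ### Lower central series -/

lemma toAdd_left_mul (g h : GpExample c) :
    Multiplicative.toAdd (g*h).left = Multiplicative.toAdd g.left
      + q c (Multiplicative.toAdd g.right) * Multiplicative.toAdd h.left := by
  have := mmk_mul (Multiplicative.toAdd g.left) (Multiplicative.toAdd h.left)
    (Multiplicative.toAdd g.right) (Multiplicative.toAdd h.right)
  rw [← mmk_surj, ← mmk_surj] at this
  rw [this]
  rfl

lemma toAdd_right_mul (g h : GpExample c) :
    Multiplicative.toAdd (g*h).right
      = Multiplicative.toAdd g.right + Multiplicative.toAdd h.right := rfl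

lemma toAdd_inv (g : GpExample c) :
    g⁻¹ = mmk (-(q c (-(Multiplicative.toAdd g.right)) * Multiplicative.toAdd g.left))
      (-(Multiplicative.toAdd g.right)) := by
  rw [mmk_surj g, mmk_inv, ← mmk_surj g]

def Lsub (c : ℕ) (i : ℕ) : Subgroup (GpExample c) where
  carrier := {g | Multiplicative.toAdd g.right = 0 ∧
      (3:ZMod (3^c))^i ∣ Multiplicative.toAdd g.left}
  one_mem' := ⟨rfl, dvd_zero _⟩
  mul_mem' := by
    rintro g h ⟨hg1, hg2⟩ ⟨hh1, hh2⟩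
    refine ⟨by rw [toAdd_right_mul, hg1, hh1, add_zero], ?_⟩
    rw [toAdd_left_mul, hg1, q_zero, one_mul]
    exact dvd_add hg2 hh2
  inv_mem' := by
    rintro g ⟨hg1, hg2⟩
    rw [toAdd_inv g, hg1]
    refine ⟨rfl, ?_⟩
    show (3:ZMod (3^c))^_ ∣ -(q c (-0) * Multiplicative.toAdd g.left)
    rw [neg_zero, q_zero, one_mul]
    exact Dvd.dvd.neg_right hg2

lemma mem_Lsub (i : ℕ) (x : ZMod (3^c)) (p : ℤ) :
    mmk x p ∈ Lsub c i ↔ p = 0 ∧ (3:ZMod (3^c))^i ∣ x := by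
  unfold Lsub
  rw [Subgroup.mem_mk]
  rfl

lemma lcs_eq (j : ℕ) : (⊤ : Subgroup (GpExample c)).lowerCentralSeries (j+1) = Lsub c (j+1) := by
  induction j with
  | zero =>
      apply le_antisymm
      · rw [Subgroup.lowerCentralSeries_succ, Subgroup.commutator_def]
        apply (Subgroup.closure_le _).mpr
        rintro x ⟨p, -, qq, -, rfl⟩
        rw [commutatorElement_def, mmk_surj p, mmk_surj qq, conj_mul_inv_mem]
        rw [SetLike.mem_coe, mem_Lsub]
        refine ⟨rfl, ?_⟩
        rw [pow_one]
        refine dvd_add (Dvd.dvd.mul_right ?_ _) (Dvd.dvd.mul_right (three_dvd_q _) _)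
        obtain ⟨d0, hd0⟩ := three_dvd_q (c := c) (Multiplicative.toAdd p.right)
        exact ⟨-d0, by linear_combination -hd0⟩
      · intro g hg
        rw [mmk_surj g] at hg ⊢
        obtain ⟨h1, h2⟩ := (mem_Lsub _ _ _).mp hg
        obtain ⟨w, hw⟩ := h2
        rw [pow_one] at hw
        rw [Subgroup.lowerCentralSeries_succ, Subgroup.commutator_def]
        apply Subgroup.subset_closure
        refine ⟨mmk (-w) 0, Subgroup.mem_top _, mmk 0 1, Subgroup.mem_top _, ?_⟩
        rw [commutatorElement_def, conj_mul_inv_mem]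
        rw [h1, hw]
        congr 1
        rw [q_zero, q_one]
        ring
  | succ j ih =>
      apply le_antisymm
      · rw [Subgroup.lowerCentralSeries_succ, Subgroup.commutator_def]
        apply (Subgroup.closure_le _).mpr
        rintro x ⟨p, hp, qq, -, rfl⟩
        rw [ih] at hp
        rw [mmk_surj p] at hp
        obtain ⟨h1, h2⟩ := (mem_Lsub _ _ _).mp hp
        obtain ⟨w, hw⟩ := h2
        rw [commutatorElement_def, mmk_surj p, mmk_surj qq, conj_mul_inv_mem]
        rw [SetLike.mem_coe, mem_Lsub]
        refine ⟨rfl, ?_⟩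
        rw [h1, q_zero, hw]
        obtain ⟨d, hd⟩ := three_dvd_q (c := c) (Multiplicative.toAdd qq.right)
        rw [hd]
        exact ⟨d * w, by ring⟩
      · intro g hg
        rw [mmk_surj g] at hg ⊢
        obtain ⟨h1, h2⟩ := (mem_Lsub _ _ _).mp hg
        obtain ⟨w, hw⟩ := h2
        rw [Subgroup.lowerCentralSeries_succ, Subgroup.commutator_def]
        apply Subgroup.subset_closure
        refine ⟨mmk (-((3:ZMod (3^c))^(j+1)*w)) 0, ?_, mmk 0 1, Subgroup.mem_top _, ?_⟩
        · rw [ih, mem_Lsub]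
          exact ⟨rfl, Dvd.dvd.neg_right (Dvd.intro _ rfl)⟩
        · rw [commutatorElement_def, conj_mul_inv_mem]
          rw [h1, hw]
          congr 1
          rw [q_zero, q_one]
          ring

lemma lcs_c_eq_bot (hc : 1 ≤ c) : (⊤ : Subgroup (GpExample c)).lowerCentralSeries c = ⊥ := by
  obtain ⟨j, rfl⟩ : ∃ j, c = j + 1 := ⟨c - 1, by omega⟩
  rw [lcs_eq]
  rw [Subgroup.eq_bot_iff_forall]
  intro g hg
  rw [mmk_surj g] at hg ⊢
  obtain ⟨h1, h2⟩ := (mem_Lsub _ _ _).mp hg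
  have h3 : (3:ZMod (3^(j+1)))^(j+1) = 0 := by
    have h0 : ((3^(j+1) : ℕ) : ZMod (3^(j+1))) = 0 := ZMod.natCast_self _
    push_cast at h0
    exact h0
  rw [h3, zero_dvd_iff] at h2
  rw [h1, h2, mmk_one]

lemma lcs_pred_ne_bot (hc : 1 ≤ c) : (⊤ : Subgroup (GpExample c)).lowerCentralSeries (c-1) ≠ ⊥ := by
  rcases Nat.lt_or_ge 1 c with h2 | h2
  · obtain ⟨j, rfl⟩ : ∃ j, c = j + 2 := ⟨c-2, by omega⟩
    have hj : j + 2 - 1 = j + 1 := rfl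
    rw [hj, lcs_eq]
    intro hbot
    have hmem : mmk ((3:ZMod (3^(j+2)))^(j+1)) 0 ∈ Lsub (j+2) (j+1) :=
      (mem_Lsub _ _ _).mpr ⟨rfl, dvd_refl _⟩
    rw [hbot, Subgroup.mem_bot, ← mmk_one] at hmem
    have h4 := (mmk_inj hmem).1
    have h5 : ((3^(j+1) : ℕ) : ZMod (3^(j+2))) = 0 := by push_cast; exact h4
    rw [ZMod.natCast_eq_zero_iff] at h5
    have h6 := Nat.le_of_dvd (by positivity) h5
    have h7 : (3:ℕ)^(j+1) < 3^(j+2) := Nat.pow_lt_pow_right (by norm_num) (by omega)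
    omega
  · have hc1 : c = 1 := by omega
    subst hc1
    have h0 : (1:ℕ) - 1 = 0 := rfl
    rw [h0, Subgroup.lowerCentralSeries_zero]
    intro hbot
    have hmem : (mmk 0 1 : GpExample 1) ∈ (⊤ : Subgroup (GpExample 1)) := Subgroup.mem_top _
    rw [hbot, Subgroup.mem_bot, ← mmk_one] at hmem
    have h4 := (mmk_inj hmem).2
    norm_num at h4

end MagnusAux

theorem GpExample_nilpotent_class_c_and_magnus (c : ℕ) (hc : 1 ≤ c) :
    Group.IsNilpotent (GpExample c) ∧
    (⊤ : Subgroup (GpExample c)).lowerCentralSeries c = ⊥ ∧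
    (⊤ : Subgroup (GpExample c)).lowerCentralSeries (c - 1) ≠ ⊥ ∧
    MagnusProperty (GpExample c) := by
  refine ⟨Subgroup.nilpotent_iff_lowerCentralSeries.mpr ⟨c, MagnusAux.lcs_c_eq_bot hc⟩,
    MagnusAux.lcs_c_eq_bot hc, MagnusAux.lcs_pred_ne_bot hc, MagnusAux.magnus_of hc⟩
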